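/- arXiv:2010.13720 — 9 statements merged into one kernel-verified Lean document; each statement's English description precedes it below -/
import Mathlib

section
/- For integers r ≥ 2, x ≥ 1, and any integer b with b = α(1+x·r)+β where 0 ≤ α < r and 0 ≤ β < 1+x·r, one has b - x·⌊b/(1+x·r)⌋ - (r-1)·⌊b/r⌋ = α + β - (r-1)·⌊(α+β)/r⌋. -/
theorem stmt_0 (r x b α β : ℤ) (hr : 2 ≤ r) (hx : 1 ≤ x)
    (hα0 : 0 ≤ α) (hαr : α < r) (hβ0 : 0 ≤ β) (hβ : β < 1 + x * r)
    (hb : b = α * (1 + x * r) + β) :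
    b - x * (Int.fdiv b (1 + x * r)) - (r - 1) * (Int.fdiv b r)
      = α + β - (r - 1) * (Int.fdiv (α + β) r) := by
  have hc : (0:ℤ) < 1 + x * r := by nlinarith
  have hr0 : (0:ℤ) < r := by linarith
  have h1 : Int.fdiv b (1 + x * r) = α := by
    rw [Int.fdiv_eq_ediv_of_nonneg _ hc.le, hb, add_comm, Int.add_mul_ediv_right _ _ hc.ne',
      Int.ediv_eq_zero_of_lt hβ0 hβ, zero_add]
  have h2 : Int.fdiv b r = α * x + Int.fdiv (α + β) r := by
    rw [Int.fdiv_eq_ediv_of_nonneg _ hr0.le, Int.fdiv_eq_ediv_of_nonneg _ hr0.le]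
    have : b = (α + β) + (α * x) * r := by ring_nf; linarith [hb]
    rw [this, Int.add_mul_ediv_right _ _ hr0.ne']
    ring
  rw [h1, h2, hb]
  ring
end

section
/- Let r ≥ 2 and x ≥ 1 be integers. The number of integers b with 0 ≤ b ≤ r(xr+1)-1 satisfying b - x·⌊b/(1+xr)⌋ - (r-1)·⌊b/r⌋ = 1 equals r + 2. -/
theorem stmt_1 (r x : ℤ) (hr : 2 ≤ r) (hx : 1 ≤ x) :
    ((Finset.Ico (0 : ℤ) (r * (x * r + 1))).filter
      (fun b => b - x * (Int.fdiv b (1 + x * r)) - (r - 1) * (Int.fdiv b r) = 1)).card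
      = r.toNat + 2 := by
  have hxr : 0 < x * r := mul_pos (by linarith) (by linarith)
  have hd : (0:ℤ) < 1 + x * r := by linarith
  have hr0 : (0:ℤ) < r := by linarith
  have hrxr : r ≤ x * r := by nlinarith
  have key : (Finset.Ico (0 : ℤ) (r * (x * r + 1))).filter
      (fun b => b - x * (Int.fdiv b (1 + x * r)) - (r - 1) * (Int.fdiv b r) = 1)
      = insert 1 (insert (x*r+1) ((Finset.Ico (0:ℤ) r).image (fun k => r + k*(x*r)))) := by
    ext b
    simp only [Finset.mem_filter, Finset.mem_Ico, Finset.mem_insert, Finset.mem_image]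
    constructor
    · rintro ⟨⟨hb0, hb1⟩, heq⟩
      rw [Int.fdiv_eq_ediv_of_nonneg _ hd.le, Int.fdiv_eq_ediv_of_nonneg _ hr0.le] at heq
      set q := b / (1 + x*r) with hqdef
      set s := b % (1 + x*r) with hsdef
      have hq : b = (1 + x*r) * q + s := by
        rw [hqdef, hsdef]; exact (Int.mul_ediv_add_emod b (1+x*r)).symm
      have hs0 : 0 ≤ s := Int.emod_nonneg b hd.ne'
      have hs1 : s < 1 + x*r := Int.emod_lt_of_pos b hd
      have hq0 : 0 ≤ q := Int.ediv_nonneg hb0 hd.le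
      have hq1 : q < r := by
        rw [hqdef]
        refine (Int.ediv_lt_iff_lt_mul hd).mpr ?_
        have e : r * (x*r+1) = r * (1+x*r) := by ring
        linarith
      have hbr : b / r = (q+s)/r + q*x := by
        have e : b = (q + s) + (q*x)*r := by linear_combination hq
        rw [e, Int.add_mul_ediv_right _ _ hr0.ne']
      rw [hbr] at heq
      set m := (q+s)/r with hmdef
      set v := (q+s)%r with hvdef
      have ht : q + s = r * m + v := by
        rw [hmdef, hvdef]; exact (Int.mul_ediv_add_emod (q+s) r).symm
      have hv0 : 0 ≤ v := Int.emod_nonneg (q+s) hr0.ne'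
      have hm0 : 0 ≤ m := Int.ediv_nonneg (by linarith) hr0.le
      have hkey : b - x*q - (r-1)*(m + q*x) = m + v := by linear_combination hq + ht
      have hmv : m + v = 1 := by linarith [heq, hkey]
      rcases (by omega : (m = 0 ∧ v = 1) ∨ (m = 1 ∧ v = 0)) with ⟨hm, hv⟩ | ⟨hm, hv⟩
      · have hts : q + s = 1 := by rw [hm, hv] at ht; linarith
        rcases (by omega : q = 0 ∨ q = 1) with hqe | hqe
        · left; rw [hqe] at hq; linarith
        · right; left; rw [hqe] at hq; linarith
      · have hts : q + s = r := by rw [hm, hv] at ht; linarith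
        right; right
        exact ⟨q, ⟨hq0, hq1⟩, by linear_combination -hq - hts⟩
    · have h1r : Int.fdiv 1 r = 0 := by
        rw [Int.fdiv_eq_ediv_of_nonneg _ hr0.le]
        exact Int.ediv_eq_zero_of_lt (by norm_num) (by linarith)
      rintro (rfl | rfl | ⟨k, ⟨hk0, hk1⟩, rfl⟩)
      · refine ⟨⟨by norm_num, by nlinarith⟩, ?_⟩
        have h1 : Int.fdiv 1 (1 + x*r) = 0 := by
          rw [Int.fdiv_eq_ediv_of_nonneg _ hd.le]
          exact Int.ediv_eq_zero_of_lt (by norm_num) (by linarith)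
        rw [h1, h1r]; ring
      · refine ⟨⟨by positivity, by nlinarith⟩, ?_⟩
        have h1 : Int.fdiv (x*r+1) (1 + x*r) = 1 := by
          rw [Int.fdiv_eq_ediv_of_nonneg _ hd.le]
          have e : x*r+1 = 1+x*r := by ring
          rw [e, Int.ediv_self hd.ne']
        have h2 : Int.fdiv (x*r+1) r = x := by
          rw [Int.fdiv_eq_ediv_of_nonneg _ hr0.le]
          have e : x*r+1 = 1 + x*r := by ring
          rw [e, Int.add_mul_ediv_right _ _ hr0.ne',
            Int.ediv_eq_zero_of_lt (by norm_num) (by linarith)]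
          ring
        rw [h1, h2]; ring
      · have hk : 0 ≤ k*(x*r) := mul_nonneg hk0 hxr.le
        refine ⟨⟨by linarith, by nlinarith [mul_pos (by linarith : (0:ℤ) < r - k) hxr]⟩, ?_⟩
        have h1 : Int.fdiv (r + k*(x*r)) (1 + x*r) = k := by
          rw [Int.fdiv_eq_ediv_of_nonneg _ hd.le]
          have e : r + k*(x*r) = (r - k) + k*(1 + x*r) := by ring
          rw [e, Int.add_mul_ediv_right _ _ hd.ne',
            Int.ediv_eq_zero_of_lt (by linarith) (by linarith)]
          ring
        have h2 : Int.fdiv (r + k*(x*r)) r = 1 + k*x := by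
          rw [Int.fdiv_eq_ediv_of_nonneg _ hr0.le]
          have e : r + k*(x*r) = (1 + k*x) * r := by ring
          rw [e, Int.mul_ediv_cancel _ hr0.ne']
        rw [h1, h2]; ring
  rw [key]
  have hinj : Set.InjOn (fun k : ℤ => r + k*(x*r)) (Finset.Ico (0:ℤ) r) := by
    intro a _ b _ hab
    simp only at hab
    have : a * (x*r) = b * (x*r) := by linarith
    exact mul_right_cancel₀ hxr.ne' this
  have hmem2 : (x*r+1 : ℤ) ∉ (Finset.Ico (0:ℤ) r).image (fun k => r + k*(x*r)) := by
    simp only [Finset.mem_image, Finset.mem_Ico, not_exists]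
    rintro k ⟨⟨hk0, hk1⟩, he⟩
    rcases (by omega : k = 0 ∨ 1 ≤ k) with rfl | hk
    · simp at he; linarith
    · nlinarith [mul_le_mul_of_nonneg_right hk hxr.le]
  have hmem1 : (1 : ℤ) ∉ insert (x*r+1) ((Finset.Ico (0:ℤ) r).image (fun k => r + k*(x*r))) := by
    simp only [Finset.mem_insert, Finset.mem_image, Finset.mem_Ico, not_or, not_exists]
    constructor
    · linarith
    · rintro k ⟨⟨hk0, hk1⟩, he⟩
      nlinarith [mul_nonneg hk0 hxr.le]
  rw [Finset.card_insert_of_notMem hmem1, Finset.card_insert_of_notMem hmem2,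
    Finset.card_image_of_injOn hinj]
  simp only [Int.card_Ico, sub_zero]
end

section
/- Let q = (q₁,…,q_d) ∈ ℤ_{≥1}^d and let Δ_{(1,q)} = conv{e₁,…,e_d, -q} ⊂ ℝ^d. If q = (r₁^{x₁}, (1+r₁x₁)^{r₁-1}) with r₁ ≥ 2 and x₁ ≥ 1 (so d = x₁ + r₁ - 1), then Δ_{(1,q)} equals the set of t ∈ ℝ^d satisfying: for 1 ≤ k ≤ x₁, Σ_{j≠k} t_j - x₁r₁t_k ≤ 1; for x₁+1 ≤ k ≤ d, Σ_{j≠k} t_j - (r₁-1)t_k ≤ 1; and Σ_{j=1}^d t_j ≤ 1. -/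
set_option maxHeartbeats 1000000 in

theorem stmt_4 (r₁ x₁ d : ℕ) (hr : 2 ≤ r₁) (hx : 1 ≤ x₁) (hd : d = x₁ + r₁ - 1)
    (q : Fin d → ℝ)
    (hq : ∀ j : Fin d, q j = if (j : ℕ) < x₁ then (r₁ : ℝ) else 1 + r₁ * x₁) :
    convexHull ℝ ((Set.range fun i : Fin d => Pi.single i (1 : ℝ)) ∪ {-q}) =
      {t : Fin d → ℝ |
        (∀ k : Fin d,
          (∑ j, t j) - t k -
            (if (k : ℕ) < x₁ then (x₁ * r₁ : ℝ) else ((r₁ : ℝ) - 1)) * t k ≤ 1) ∧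
        (∑ j, t j) ≤ 1} := by
  obtain ⟨m, rfl⟩ : ∃ m, r₁ = m + 1 := ⟨r₁ - 1, by omega⟩
  have hm : 1 ≤ m := by omega
  have hd' : d = x₁ + m := by omega
  subst hd'
  set A : ℝ := 1 + (m + 1) * x₁ with hA
  have hApos : (0 : ℝ) < A := by positivity
  have hql : ∀ j : Fin (x₁ + m), (j : ℕ) < x₁ → q j = (m : ℝ) + 1 := by
    intro j hj; rw [hq]; simp [hj]
  have hqr : ∀ j : Fin (x₁ + m), ¬ (j : ℕ) < x₁ → q j = A := by
    intro j hj; rw [hq, if_neg hj, hA]; push_cast; ring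
  have hqsum : ∑ j, q j = (m + 1) * A - 1 := by
    rw [Fin.sum_univ_add (f := q)]
    have h1 : ∀ i : Fin x₁, q (Fin.castAdd m i) = (m : ℝ) + 1 := by
      intro i; exact hql _ (by simp [i.isLt])
    have h2 : ∀ i : Fin m, q (Fin.natAdd x₁ i) = A := by
      intro i; exact hqr _ (by simp)
    rw [Finset.sum_congr rfl fun i _ => h1 i, Finset.sum_congr rfl fun i _ => h2 i]
    simp only [Finset.sum_const, Finset.card_univ, Fintype.card_fin, nsmul_eq_mul, hA]
    push_cast; ring
  clear_value A
  have hx0 : (0:ℝ) ≤ (x₁ : ℝ) := by positivity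
  have hm0 : (0:ℝ) ≤ (m : ℝ) := by positivity
  ext t
  constructor
  · -- forward direction
    intro ht
    refine convexHull_min ?_ ?_ ht
    · rintro u (⟨i, rfl⟩ | rfl)
      · refine ⟨fun k => ?_, ?_⟩
        · have hs1 : ∑ j, Pi.single i (1 : ℝ) j = 1 := by
            simp [Finset.sum_pi_single']
          rw [hs1]
          rcases eq_or_ne k i with rfl | hne
          · simp only [Pi.single_apply, if_pos rfl]
            push_cast
            split <;> nlinarith
          · simp only [Pi.single_apply, if_neg hne]
            split <;> nlinarith
        · simp [Finset.sum_pi_single']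
      · have hsq : ∑ j, (-q) j = 1 - (m + 1) * A := by
          simp only [Pi.neg_apply, Finset.sum_neg_distrib, hqsum]; ring
        refine ⟨fun k => ?_, ?_⟩
        · rw [hsq]
          simp only [Pi.neg_apply]
          by_cases hk : (k : ℕ) < x₁
          · rw [if_pos hk, hql k hk, hA]; push_cast <;> nlinarith
          · rw [if_neg hk, hqr k hk, hA]; push_cast <;> nlinarith
        · rw [hsq]; nlinarith
    · -- convexity
      intro u hu v hv a b ha hb hab
      have hsum : ∀ (w z : Fin (x₁ + m) → ℝ),
          ∑ j, (a • w + b • z) j = a * ∑ j, w j + b * ∑ j, z j := by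
        intro w z
        simp [Finset.sum_add_distrib, Finset.mul_sum]
      refine ⟨fun k => ?_, ?_⟩
      · have h1 := hu.1 k
        have h2 := hv.1 k
        rw [hsum]
        simp only [Pi.add_apply, Pi.smul_apply, smul_eq_mul]
        by_cases hk : (k : ℕ) < x₁
        · rw [if_pos hk] at h1 h2 ⊢
          nlinarith [mul_le_mul_of_nonneg_left h1 ha, mul_le_mul_of_nonneg_left h2 hb]
        · rw [if_neg hk] at h1 h2 ⊢
          nlinarith [mul_le_mul_of_nonneg_left h1 ha, mul_le_mul_of_nonneg_left h2 hb]
      · have h1 := hu.2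
        have h2 := hv.2
        rw [hsum]; nlinarith
  · -- backward direction
    rintro ⟨h1, h2⟩
    set s : ℝ := ∑ j, t j with hs
    set μ : ℝ := (1 - s) / ((m + 1) * A) with hμdef
    have hμ : μ * ((m + 1) * A) = 1 - s := by
      rw [hμdef]; field_simp
    have hμ0 : 0 ≤ μ := div_nonneg (by linarith) (by positivity)
    clear_value s μ
    have hw0 : ∀ o : Option (Fin (x₁ + m)),
        0 ≤ Option.elim o μ (fun i => t i + μ * q i) := by
      rintro (_ | k)
      · exact hμ0
      · show 0 ≤ t k + μ * q k
        have hk := h1 k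
        by_cases hklt : (k : ℕ) < x₁
        · rw [if_pos hklt] at hk
          rw [hql k hklt]
          push_cast at hk
          have key : 0 ≤ A * (t k + μ * ((m : ℝ) + 1)) := by
            have h' : 0 ≤ A * t k + (1 - s) := by rw [hA]; nlinarith
            nlinarith [hμ]
          nlinarith [key, hApos]
        · rw [if_neg hklt] at hk
          rw [hqr k hklt]
          push_cast at hk
          have key : 0 ≤ ((m : ℝ) + 1) * (t k + μ * A) := by
            have h' : 0 ≤ ((m : ℝ) + 1) * t k + (1 - s) := by nlinarith
            nlinarith [hμ]
          nlinarith [key]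
    have hw1 : ∑ o : Option (Fin (x₁ + m)),
        Option.elim o μ (fun i => t i + μ * q i) = 1 := by
      rw [Fintype.sum_option]
      show μ + ∑ i : Fin (x₁ + m), (t i + μ * q i) = 1
      rw [Finset.sum_add_distrib, ← Finset.mul_sum, hqsum, ← hs]
      nlinarith [hμ]
    have hmem : ∀ o : Option (Fin (x₁ + m)),
        Option.elim o (-q) (fun i => Pi.single i (1:ℝ)) ∈
          (Set.range fun i : Fin (x₁ + m) => Pi.single i (1 : ℝ)) ∪ {-q} := by
      rintro (_ | k)
      · exact Or.inr rfl
      · exact Or.inl ⟨k, rfl⟩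
    have hcomb : ∑ o : Option (Fin (x₁ + m)),
        Option.elim o μ (fun i => t i + μ * q i) •
          (Option.elim o (-q) (fun i => Pi.single i (1:ℝ)) : Fin (x₁ + m) → ℝ) = t := by
      rw [Fintype.sum_option]
      funext j
      show μ * (-q j) + (∑ i : Fin (x₁ + m),
        (t i + μ * q i) • (Pi.single i (1:ℝ) : Fin (x₁ + m) → ℝ)) j = t j
      rw [Finset.sum_apply]
      have : ∀ i : Fin (x₁ + m), ((t i + μ * q i) • (Pi.single i (1:ℝ) : Fin (x₁ + m) → ℝ)) j
          = if j = i then t i + μ * q i else 0 := by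
        intro i
        simp [Pi.single_apply]
      rw [Finset.sum_congr rfl fun i _ => this i, Finset.sum_ite_eq Finset.univ j]
      simp
    have hfinal := (convex_convexHull ℝ
        ((Set.range fun i : Fin (x₁ + m) => Pi.single i (1 : ℝ)) ∪ {-q})).sum_mem
      (fun o (_ : o ∈ Finset.univ) => hw0 o) hw1
      (fun o _ => subset_convexHull ℝ _ (hmem o))
    rw [hcomb] at hfinal
    exact hfinal
end

section
/- Let r₁ ≥ 2, x₁ ≥ 1, d = x₁ + r₁ - 1, q = (r₁^{x₁},(1+r₁x₁)^{r₁-1}), and for 1 ≤ i ≤ r₁ define a'_i = ((-(r₁-i+1))^{x₁}, (-(1+(r₁-i+1)x₁))^{r₁-1}) ∈ ℤ^d. Then each a'_i satisfies all d+1 inequalities of the H-description of Δ_{(1,q)}; in particular, for 2 ≤ i ≤ r₁, λ_k(a'_i) = 1 for x₁+1 ≤ k ≤ d and λ_k(a'_i) < 1 for all other k, and λ_k(a'_1) = 1 for all 1 ≤ k ≤ d with λ_{d+1}(a'_1) < 1. -/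
lemma sum_if_aux (d x₁ : ℕ) (h : x₁ ≤ d) (A B : ℝ) :
    (∑ j : Fin d, if (j : ℕ) < x₁ then A else B) = x₁ * A + (d - x₁ : ℕ) * B := by
  rw [Fin.sum_univ_eq_sum_range (fun j => if j < x₁ then A else B) d]
  rw [Finset.range_eq_Ico, ← Finset.sum_Ico_consecutive _ (Nat.zero_le x₁) h]
  have h1 : (∑ j ∈ Finset.Ico 0 x₁, if j < x₁ then A else B) = x₁ * A := by
    rw [Finset.sum_congr rfl (fun j hj => if_pos (Finset.mem_Ico.mp hj).2)]
    simp [mul_comm]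
  have h2 : (∑ j ∈ Finset.Ico x₁ d, if j < x₁ then A else B) = (d - x₁ : ℕ) * B := by
    rw [Finset.sum_congr rfl (fun j hj => if_neg (not_lt.mpr (Finset.mem_Ico.mp hj).1))]
    simp [mul_comm]
  rw [h1, h2]

theorem stmt_7 (r₁ x₁ d : ℕ) (hr : 2 ≤ r₁) (hx : 1 ≤ x₁) (hd : d = x₁ + r₁ - 1)
    (lam : Fin d → (Fin d → ℝ) → ℝ)
    (hlam : ∀ k t, lam k t =
      (∑ j, t j) - t k -
        (if (k : ℕ) < x₁ then (x₁ * r₁ : ℝ) else ((r₁ : ℝ) - 1)) * t k)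
    (a : ℕ → Fin d → ℝ)
    (ha : ∀ i (j : Fin d), a i j =
      if (j : ℕ) < x₁ then -((r₁ : ℝ) - i + 1) else -(1 + ((r₁ : ℝ) - i + 1) * x₁)) :
    ∀ i : ℕ, 1 ≤ i → i ≤ r₁ →
      ((∀ k : Fin d, lam k (a i) ≤ 1) ∧ (∑ j, a i j) ≤ 1) ∧
      (2 ≤ i →
        (∀ k : Fin d, x₁ ≤ (k : ℕ) → lam k (a i) = 1) ∧
        (∀ k : Fin d, (k : ℕ) < x₁ → lam k (a i) < 1) ∧
        (∑ j, a i j) < 1) ∧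
      (i = 1 → (∀ k : Fin d, lam k (a i) = 1) ∧ (∑ j, a i j) < 1) := by
  intro i hi1 hir
  have hx₁d : x₁ ≤ d := by omega
  have hdx : d - x₁ = r₁ - 1 := by omega
  have hr' : (2 : ℝ) ≤ r₁ := by exact_mod_cast hr
  have hx' : (1 : ℝ) ≤ x₁ := by exact_mod_cast hx
  have hi1' : (1 : ℝ) ≤ i := by exact_mod_cast hi1
  have hir' : (i : ℝ) ≤ r₁ := by exact_mod_cast hir
  set c : ℝ := (r₁ : ℝ) - i + 1 with hc
  have hc1 : 1 ≤ c := by simp only [hc]; linarith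
  have hcast : ((r₁ - 1 : ℕ) : ℝ) = (r₁ : ℝ) - 1 := by
    have : 1 ≤ r₁ := by omega
    push_cast [this]; ring
  have hsum : (∑ j, a i j) = -((r₁ : ℝ) - 1) - r₁ * x₁ * c := by
    calc (∑ j, a i j) = ∑ j : Fin d, if (j : ℕ) < x₁ then -c else -(1 + c * x₁) := by
          exact Finset.sum_congr rfl fun j _ => ha i j
    _ = x₁ * (-c) + (d - x₁ : ℕ) * (-(1 + c * x₁)) := sum_if_aux d x₁ hx₁d _ _
    _ = -((r₁ : ℝ) - 1) - r₁ * x₁ * c := by rw [hdx, hcast]; ring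
  have hlamlt : ∀ k : Fin d, (k : ℕ) < x₁ → lam k (a i) = 2 - i := by
    intro k hk
    rw [hlam, hsum, ha, if_pos hk, if_pos hk, hc]
    ring
  have hlamge : ∀ k : Fin d, x₁ ≤ (k : ℕ) → lam k (a i) = 1 := by
    intro k hk
    rw [hlam, hsum, ha, if_neg (not_lt.mpr hk), if_neg (not_lt.mpr hk), hc]
    ring
  have hsumlt : (∑ j, a i j) < 1 := by
    rw [hsum]
    have h1 : (1 : ℝ) * 1 ≤ x₁ * c := mul_le_mul hx' hc1 (by norm_num) (by linarith)
    nlinarith [h1]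
  refine ⟨⟨fun k => ?_, le_of_lt hsumlt⟩, fun hi2 => ?_, fun hi => ?_⟩
  · rcases lt_or_ge (k : ℕ) x₁ with h | h
    · rw [hlamlt k h]; linarith
    · rw [hlamge k h]
  · have hi2' : (2 : ℝ) ≤ i := by exact_mod_cast hi2
    exact ⟨hlamge, fun k hk => by rw [hlamlt k hk]; linarith, hsumlt⟩
  · subst hi
    refine ⟨fun k => ?_, hsumlt⟩
    rcases lt_or_ge (k : ℕ) x₁ with h | h
    · rw [hlamlt k h]; norm_num
    · exact hlamge k h
end

section
/- Let r₁ ≥ 2, x₁ ≥ 1, d = x₁ + r₁ - 1, q = (r₁^{x₁},(1+r₁x₁)^{r₁-1}). The set of lattice points of Δ_{(1,q)} is exactly A' = {a'_1,…,a'_{r₁+3}} ∪ {e₁,…,e_d}, where a'_i = ((-(r₁-i+1))^{x₁},(-(1+(r₁-i+1)x₁))^{r₁-1}) for 1 ≤ i ≤ r₁, a'_{r₁+1} = ((-1)^{x₁},(-x₁)^{r₁-1}), a'_{r₁+2} = (0^{x₁},(-1)^{r₁-1}), and a'_{r₁+3} = 0. -/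
lemma sum_ite_fin {d x : ℕ} (hx : x ≤ d) (A B : ℤ) :
    ∑ j : Fin d, (if (j : ℕ) < x then A else B) = x * A + (d - x : ℕ) * B := by
  rw [Fin.sum_univ_eq_sum_range (fun j => if j < x then A else B) d,
    ← Finset.sum_range_add_sum_Ico _ hx]
  rw [Finset.sum_congr rfl (fun j hj => if_pos (Finset.mem_range.mp hj)),
    Finset.sum_congr rfl (fun j hj => if_neg (by
      have := (Finset.mem_Ico.mp hj).1; omega)), Finset.sum_const, Finset.sum_const]
  simp [Nat.card_Ico, mul_comm]

lemma hull_char {d : ℕ} (q : Fin d → ℝ) (hq : ∀ j, 0 ≤ q j) (p : Fin d → ℝ) :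
    p ∈ convexHull ℝ ((Set.range fun i : Fin d => Pi.single i (1 : ℝ)) ∪ {fun j => -(q j)}) ↔
      ((∑ j, p j) ≤ 1 ∧ ∀ j, 0 ≤ (1 + ∑ k, q k) * p j + q j * (1 - ∑ k, p k)) := by
  set N : ℝ := 1 + ∑ k, q k with hN
  have hqs : 0 ≤ ∑ k, q k := Finset.sum_nonneg fun k _ => hq k
  have hNpos : 0 < N := by rw [hN]; linarith
  constructor
  · intro hp
    have hsub : (Set.range fun i : Fin d => Pi.single i (1 : ℝ)) ∪ {fun j => -(q j)} ⊆
        {p : Fin d → ℝ | (∑ j, p j) ≤ 1 ∧ ∀ j, 0 ≤ N * p j + q j * (1 - ∑ k, p k)} := by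
      rintro x (⟨i, rfl⟩ | rfl)
      · constructor
        · rw [Finset.sum_pi_single']; simp
        · intro j
          rw [Finset.sum_pi_single']
          simp only [Finset.mem_univ, if_pos, sub_self, mul_zero, add_zero]
          have h0 : (0:ℝ) ≤ (Pi.single i (1:ℝ) : Fin d → ℝ) j := by
            rw [Pi.single_apply]; split <;> norm_num
          positivity
      · constructor
        · have h1 : (∑ j : Fin d, -q j) = -∑ k, q k := by rw [Finset.sum_neg_distrib]
          simp only [Set.mem_setOf_eq]
          rw [h1]; linarith
        · intro j
          have h1 : (∑ j : Fin d, -q j) = -∑ k, q k := by rw [Finset.sum_neg_distrib]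
          simp only [Set.mem_setOf_eq]
          rw [h1]
          have h2 : N * -q j + q j * (1 - -∑ k, q k) = 0 := by rw [hN]; ring
          linarith
    have hconv : Convex ℝ {p : Fin d → ℝ | (∑ j, p j) ≤ 1 ∧ ∀ j, 0 ≤ N * p j + q j * (1 - ∑ k, p k)} := by
      intro x hx y hy α β hα hβ hαβ
      have hsx : (∑ j, (α • x + β • y) j) = α * (∑ j, x j) + β * (∑ j, y j) := by
        simp [Finset.sum_add_distrib, Finset.mul_sum]
      constructor
      · rw [hsx]; nlinarith [hx.1, hy.1]
      · intro j
        rw [hsx]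
        have h1 := mul_nonneg hα (hx.2 j)
        have h2 := mul_nonneg hβ (hy.2 j)
        have h4 : q j * (1 - α - β) = 0 := by
          have h5 : (1:ℝ) - α - β = 0 := by linarith
          rw [h5, mul_zero]
        have h3 : (α • x + β • y) j = α * x j + β * y j := by simp
        rw [h3]
        nlinarith [h1, h2, h4]
    exact (convexHull_min hsub hconv hp : _)
  · rintro ⟨hS, hcond⟩
    set t : ℝ := 1 - ∑ k, p k with ht
    have htn : 0 ≤ t := by rw [ht]; linarith
    set w : Option (Fin d) → ℝ := fun o => o.elim (t / N) (fun j => p j + (t / N) * q j) with hw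
    have hw0 : ∀ i ∈ Finset.univ, 0 ≤ w (i : Option (Fin d)) := by
      rintro (_ | j) _
      · exact div_nonneg htn hNpos.le
      · simp only [hw, Option.elim]
        have he : p j + t / N * q j = (N * p j + q j * t) / N := by field_simp
        rw [he]
        exact div_nonneg (hcond j) hNpos.le
    have hwsum : (∑ i : Option (Fin d), w i) = 1 := by
      rw [Fintype.sum_option]
      simp only [hw, Option.elim]
      rw [Finset.sum_add_distrib, ← Finset.mul_sum]
      have h5 : t / N + (∑ j, p j + t / N * ∑ k, q k) = t / N * N + ∑ j, p j := by rw [hN]; ring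
      rw [h5, div_mul_cancel₀ _ hNpos.ne']
      rw [ht]; ring
    set z : Option (Fin d) → (Fin d → ℝ) := fun o => o.elim (fun j => -(q j)) (fun i => Pi.single i 1) with hz
    have hzmem : ∀ i ∈ Finset.univ, z (i : Option (Fin d)) ∈
        (Set.range fun i : Fin d => Pi.single i (1 : ℝ)) ∪ {fun j => -(q j)} := by
      rintro (_ | j) _
      · exact Or.inr rfl
      · exact Or.inl ⟨j, rfl⟩
    have hmem := Finset.centerMass_mem_convexHull Finset.univ hw0 (by rw [hwsum]; norm_num) hzmem
    rw [Finset.centerMass_eq_of_sum_1 _ _ hwsum] at hmem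
    have hpe : p = ∑ i : Option (Fin d), w i • z i := by
      funext j
      rw [Finset.sum_apply]
      rw [Fintype.sum_option (fun i => (w i • z i) j)]
      simp only [hw, hz, Option.elim, Pi.smul_apply, smul_eq_mul]
      have h6 : (∑ i : Fin d, (p i + t / N * q i) * (Pi.single i (1:ℝ) : Fin d → ℝ) j)
          = p j + t / N * q j := by
        rw [Finset.sum_eq_single j]
        · rw [Pi.single_eq_same, mul_one]
        · intro b _ hb
          rw [Pi.single_eq_of_ne' hb, mul_zero]
        · intro h; exact absurd (Finset.mem_univ j) h
      rw [h6]; ring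
    rw [hpe]; exact hmem

set_option maxHeartbeats 4000000 in
theorem stmt_10 (r₁ x₁ d : ℕ) (hr : 2 ≤ r₁) (hx : 1 ≤ x₁) (hd : d = x₁ + r₁ - 1)
    (q : Fin d → ℤ)
    (hq : ∀ j : Fin d, q j = if (j : ℕ) < x₁ then (r₁ : ℤ) else 1 + r₁ * x₁)
    (a : ℕ → Fin d → ℤ)
    (ha : ∀ i (j : Fin d), a i j =
      if i ≤ r₁ then
        (if (j : ℕ) < x₁ then -((r₁ : ℤ) - i + 1) else -(1 + ((r₁ : ℤ) - i + 1) * x₁))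
      else if i = r₁ + 1 then (if (j : ℕ) < x₁ then -1 else -(x₁ : ℤ))
      else if i = r₁ + 2 then (if (j : ℕ) < x₁ then 0 else -1)
      else 0) :
    {p : Fin d → ℤ |
        (fun j => (p j : ℝ)) ∈
          convexHull ℝ
            ((Set.range fun i : Fin d => Pi.single i (1 : ℝ)) ∪
              {fun j => -(q j : ℝ)})} =
      (a '' Set.Icc 1 (r₁ + 3)) ∪ (Set.range fun j : Fin d => Pi.single j (1 : ℤ)) := by
  have hdx : x₁ ≤ d := by omega
  have hr' : (2:ℤ) ≤ (r₁:ℤ) := by exact_mod_cast hr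
  have hx' : (1:ℤ) ≤ (x₁:ℤ) := by exact_mod_cast hx
  set M : ℤ := 1 + (r₁:ℤ) * (x₁:ℤ) with hM
  clear_value M
  have hMpos : 0 < M := by rw [hM]; nlinarith
  have hr0 : (0:ℤ) < r₁ := by linarith
  have hdcast : ((d - x₁ : ℕ) : ℤ) = (r₁:ℤ) - 1 := by omega
  have hqsum : (∑ k, q k) = (x₁:ℤ) * r₁ + ((r₁:ℤ) - 1) * M := by
    rw [Finset.sum_congr rfl fun j _ => hq j, sum_ite_fin hdx, hdcast, hM]
  have hNM : 1 + (∑ k, q k) = (r₁:ℤ) * M := by rw [hqsum, hM]; ring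
  have hqnn : ∀ j : Fin d, (0:ℝ) ≤ ((q j : ℤ) : ℝ) := by
    intro j
    rw [hq j]
    split
    · positivity
    · exact_mod_cast hMpos.le
  ext p
  simp only [Set.mem_setOf_eq]
  rw [hull_char (fun j => ((q j : ℤ) : ℝ)) hqnn]
  have hcast : ((∑ j, ((p j : ℤ):ℝ)) ≤ 1 ∧
        ∀ j, 0 ≤ (1 + ∑ k, ((q k : ℤ):ℝ)) * ((p j:ℤ):ℝ) + ((q j:ℤ):ℝ) * (1 - ∑ k, ((p k:ℤ):ℝ))) ↔
      ((∑ j, p j) ≤ 1 ∧ ∀ j, 0 ≤ (1 + ∑ k, q k) * p j + q j * (1 - ∑ k, p k)) := by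
    constructor <;> rintro ⟨h1, h2⟩
    · refine ⟨by exact_mod_cast h1, fun j => by have := h2 j; exact_mod_cast this⟩
    · refine ⟨by exact_mod_cast h1, fun j => by have := h2 j; exact_mod_cast this⟩
  rw [hcast]
  clear hcast hqnn
  constructor
  · rintro ⟨hS, hC⟩
    have hC1 : ∀ j : Fin d, (j:ℕ) < x₁ → 0 ≤ (r₁:ℤ) * M * p j + (r₁:ℤ) * (1 - ∑ k, p k) := by
      intro j hj
      have := hC j
      rw [hNM, hq j, if_pos hj] at this
      exact this
    have hC2 : ∀ j : Fin d, ¬ ((j:ℕ) < x₁) → 0 ≤ (r₁:ℤ) * M * p j + M * (1 - ∑ k, p k) := by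
      intro j hj
      have := hC j
      rw [hNM, hq j, if_neg hj] at this
      exact this
    obtain ⟨S, hSdef⟩ : ∃ S : ℤ, (∑ k : Fin d, p k) = S := ⟨_, rfl⟩
    rw [hSdef] at hS hC1 hC2
    by_cases hS1 : S = 1
    · -- p is a standard basis vector
      have hpnn : ∀ j : Fin d, 0 ≤ p j := by
        intro j
        have h1 : 0 ≤ (r₁:ℤ) * M * p j := by
          by_cases hj : (j:ℕ) < x₁
          · have := hC1 j hj; rw [hS1] at this; linarith
          · have := hC2 j hj; rw [hS1] at this; linarith
        nlinarith [mul_pos hr0 hMpos, h1]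
      have hex : ∃ j, 1 ≤ p j := by
        by_contra h
        push_neg at h
        have hle : (∑ k : Fin d, p k) ≤ 0 :=
          Finset.sum_nonpos (fun j _ => by have h1 := h j; omega)
        omega
      obtain ⟨j₀, hj₀⟩ := hex
      have herase : (∑ k ∈ Finset.univ.erase j₀, p k) + p j₀ = ∑ k : Fin d, p k :=
        Finset.sum_erase_add _ _ (Finset.mem_univ j₀)
      have hz : ∑ k ∈ Finset.univ.erase j₀, p k = 0 := by
        have h1 : 0 ≤ ∑ k ∈ Finset.univ.erase j₀, p k :=
          Finset.sum_nonneg fun k _ => hpnn k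
        omega
      have hall0 : ∀ k ∈ Finset.univ.erase j₀, p k = 0 :=
        (Finset.sum_eq_zero_iff_of_nonneg fun k _ => hpnn k).mp hz
      right
      refine ⟨j₀, ?_⟩
      funext k
      show (Pi.single j₀ (1:ℤ) : Fin d → ℤ) k = p k
      rw [Pi.single_apply]
      split_ifs with h
      · subst h; omega
      · exact (hall0 k (Finset.mem_erase.mpr ⟨h, Finset.mem_univ k⟩)).symm
    · -- S ≤ 0 cases
      set t : ℤ := 1 - S with ht
      clear_value t
      have htpos : 1 ≤ t := by omega
      set A : ℤ := t / M with hA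
      set B : ℤ := t % M with hB
      set U : ℤ := t / r₁ with hU
      set V : ℤ := t % r₁ with hV
      have hAB : M * A + B = t := by rw [hA, hB]; exact Int.mul_ediv_add_emod t M
      have hB0 : 0 ≤ B := by rw [hB]; exact Int.emod_nonneg t hMpos.ne'
      have hB1 : B < M := by rw [hB]; exact Int.emod_lt_of_pos t hMpos
      have hUV : (r₁:ℤ) * U + V = t := by rw [hU, hV]; exact Int.mul_ediv_add_emod t (r₁:ℤ)
      have hV0 : 0 ≤ V := by rw [hV]; exact Int.emod_nonneg t hr0.ne'
      have hV1 : V < r₁ := by rw [hV]; exact Int.emod_lt_of_pos t hr0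
      have hA0 : 0 ≤ A := by rw [hA]; exact Int.ediv_nonneg (by omega) hMpos.le
      have hU0 : 0 ≤ U := by rw [hU]; exact Int.ediv_nonneg (by omega) hr0.le
      clear_value A B U V
      have hb1 : ∀ j : Fin d, (j:ℕ) < x₁ → -A ≤ p j := by
        intro j hj
        have h1 := hC1 j hj
        have h2 : -p j * M ≤ t := by nlinarith
        have := (Int.le_ediv_iff_mul_le hMpos).mpr h2
        rw [← hA] at this
        linarith
      have hb2 : ∀ j : Fin d, ¬ ((j:ℕ) < x₁) → -U ≤ p j := by
        intro j hj
        have h1 := hC2 j hj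
        have h2 : -p j * (r₁:ℤ) ≤ t := by nlinarith
        have := (Int.le_ediv_iff_mul_le hr0).mpr h2
        rw [← hU] at this
        linarith
      set g : Fin d → ℤ := fun j => if (j:ℕ) < x₁ then -A else -U with hg
      clear_value g
      have hgle : ∀ j ∈ Finset.univ, g j ≤ p j := by
        intro j _
        rw [hg]
        dsimp only
        split_ifs with hj
        · exact hb1 j hj
        · exact hb2 j hj
      have hgsum : (∑ j, g j) = (x₁:ℤ) * (-A) + ((r₁:ℤ) - 1) * (-U) := by
        simp only [hg]
        rw [sum_ite_fin hdx, hdcast]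
      have hsum_le : (∑ j, g j) ≤ S := by
        have h7 := Finset.sum_le_sum hgle
        rw [hSdef] at h7
        exact h7
      have key : U + V ≤ (x₁:ℤ) * A + 1 := by
        rw [hgsum] at hsum_le
        linarith
      -- final construction given the value of (A, U, V)
      have finish : ∀ i : ℕ, 1 ≤ i → i ≤ r₁ + 3 →
          (∀ j : Fin d, a i j = g j) → (∑ j, g j) = S →
          p ∈ (a '' Set.Icc 1 (r₁ + 3)) ∪ (Set.range fun j : Fin d => Pi.single j (1 : ℤ)) := by
        intro i hi1 hi2 hag hgS
        left
        refine ⟨i, Set.mem_Icc.mpr ⟨hi1, hi2⟩, ?_⟩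
        rw [← hSdef] at hgS
        have heq : ∀ j ∈ Finset.univ, g j = p j :=
          (Finset.sum_eq_sum_iff_of_le hgle).mp hgS
        funext j
        rw [hag j, heq j (Finset.mem_univ j)]
      by_cases hAz : A = 0
      · rw [hAz] at key
        by_cases hUz : U = 0
        · -- t = 1, p = 0, i = r₁ + 3
          have htv : t = 1 := by
            have : t = V := by rw [← hUV, hUz]; ring
            omega
          refine finish (r₁ + 3) (by omega) le_rfl ?_ ?_
          · intro j
            rw [ha, hg]
            have h1 : ¬ (r₁ + 3 ≤ r₁) := by omega
            have h2 : ¬ (r₁ + 3 = r₁ + 1) := by omega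
            have h3 : ¬ (r₁ + 3 = r₁ + 2) := by omega
            rw [if_neg h1, if_neg h2, if_neg h3]
            dsimp only
            rw [hAz, hUz]
            split_ifs <;> ring
          · rw [hgsum, hAz, hUz]; linarith
        · -- U = 1, V = 0, t = r₁, i = r₁ + 2
          have hU1 : U = 1 := by omega
          have hVz : V = 0 := by omega
          have htv : t = r₁ := by rw [← hUV, hU1, hVz]; ring
          refine finish (r₁ + 2) (by omega) (by omega) ?_ ?_
          · intro j
            rw [ha, hg]
            have h1 : ¬ (r₁ + 2 ≤ r₁) := by omega
            have h2 : ¬ (r₁ + 2 = r₁ + 1) := by omega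
            rw [if_neg h1, if_neg h2, if_pos rfl]
            dsimp only
            rw [hAz, hU1]
            split_ifs <;> ring
          · rw [hgsum, hAz, hU1]
            omega
      · have hA1 : 1 ≤ A := by omega
        have hu_lb : (x₁:ℤ) * A ≤ U := by
          by_contra hcon
          push_neg at hcon
          have hcon' : U ≤ (x₁:ℤ) * A - 1 := by omega
          have h6 : (r₁:ℤ) * U ≤ (r₁:ℤ) * ((x₁:ℤ) * A - 1) :=
            mul_le_mul_of_nonneg_left hcon' hr0.le
          nlinarith
        by_cases hUeq : U = (x₁:ℤ) * A
        · -- A = 1, V = 1, t = M, i = r₁ + 1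
          have hAV : A ≤ V := by nlinarith
          have hA1' : A = 1 := by omega
          have hV1' : V = 1 := by
            rw [hUeq, hA1'] at key
            omega
          have hUx : U = (x₁:ℤ) := by rw [hUeq, hA1', mul_one]
          refine finish (r₁ + 1) (by omega) (by omega) ?_ ?_
          · intro j
            rw [ha, hg]
            have h1 : ¬ (r₁ + 1 ≤ r₁) := by omega
            rw [if_neg h1, if_pos rfl]
            dsimp only
            rw [hA1', hUx]
          · rw [hgsum, hA1', hUx]
            have htM : t = M := by rw [← hUV, hUx, hV1', hM]; ring
            rw [hM] at htM
            nlinarith [htM]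
        · -- U = x₁ A + 1, V = 0, t = r₁ (1 + x₁ A), i = r₁ + 1 - A
          have hUeq' : U = (x₁:ℤ) * A + 1 := by omega
          have hVz : V = 0 := by
            rw [hUeq'] at key
            omega
          have hAr : A ≤ (r₁:ℤ) := by nlinarith
          set i : ℕ := r₁ + 1 - A.toNat with hi
          have hAi : ((r₁:ℤ)) - (i:ℤ) + 1 = A := by omega
          refine finish i (by omega) (by omega) ?_ ?_
          · intro j
            rw [ha, hg]
            have h1 : i ≤ r₁ := by omega
            rw [if_pos h1]
            dsimp only
            rw [hAi, hUeq']
            split_ifs with hj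
            · rfl
            · ring
          · rw [hgsum, hUeq']
            have htr : t = (r₁:ℤ) * ((x₁:ℤ) * A + 1) := by
              rw [← hUV, hUeq', hVz]; ring
            have : S = 1 - t := by omega
            rw [this, htr]
            ring
  · rintro (⟨i, hi, rfl⟩ | ⟨j₀, rfl⟩)
    · obtain ⟨hi1, hi2⟩ := Set.mem_Icc.mp hi
      rcases (by omega : i ≤ r₁ ∨ i = r₁ + 1 ∨ i = r₁ + 2 ∨ i = r₁ + 3) with hc | hc | hc | hc
      · set k : ℤ := (r₁:ℤ) - (i:ℤ) + 1 with hk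
        have hk1 : 1 ≤ k := by
          have : (i:ℤ) ≤ (r₁:ℤ) := by exact_mod_cast hc
          omega
        have hkr : k ≤ (r₁:ℤ) := by
          have : (1:ℤ) ≤ (i:ℤ) := by exact_mod_cast hi1
          omega
        have haj : ∀ j : Fin d, a i j = if (j:ℕ) < x₁ then -k else -(1 + k * x₁) := by
          intro j
          rw [ha, if_pos hc]
        have hSa : (∑ j, a i j) = (x₁:ℤ) * (-k) + ((r₁:ℤ) - 1) * (-(1 + k * x₁)) := by
          rw [Finset.sum_congr rfl fun j _ => haj j, sum_ite_fin hdx, hdcast]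
        have hxk : (0:ℤ) ≤ (x₁:ℤ) * k := mul_nonneg (by linarith) (by linarith)
        have hrk : (0:ℤ) ≤ ((r₁:ℤ) - 1) * (k * (x₁:ℤ)) :=
          mul_nonneg (by linarith) (mul_nonneg (by linarith) (by linarith))
        refine ⟨?_, ?_⟩
        · rw [hSa]; nlinarith [hxk, hrk]
        · intro j
          rw [hNM, hq j, hSa, haj j, hM]
          split_ifs with hj
          · nlinarith [mul_nonneg hr0.le (sub_nonneg.mpr hkr)]
          · nlinarith [hxk, hrk]
      · have haj : ∀ j : Fin d, a i j = if (j:ℕ) < x₁ then -1 else -(x₁:ℤ) := by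
          intro j
          rw [ha, if_neg (by omega), if_pos hc]
        have hSa : (∑ j, a i j) = (x₁:ℤ) * (-1) + ((r₁:ℤ) - 1) * (-(x₁:ℤ)) := by
          rw [Finset.sum_congr rfl fun j _ => haj j, sum_ite_fin hdx, hdcast]
        have hrx : (0:ℤ) ≤ (r₁:ℤ) * (x₁:ℤ) := mul_nonneg (by linarith) (by linarith)
        refine ⟨?_, ?_⟩
        · rw [hSa]; nlinarith [hrx]
        · intro j
          rw [hNM, hq j, hSa, haj j, hM]
          split_ifs with hj
          · nlinarith [hrx]
          · nlinarith [hrx]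
      · have haj : ∀ j : Fin d, a i j = if (j:ℕ) < x₁ then 0 else -1 := by
          intro j
          rw [ha, if_neg (by omega), if_neg (by omega), if_pos hc]
        have hSa : (∑ j, a i j) = (x₁:ℤ) * 0 + ((r₁:ℤ) - 1) * (-1) := by
          rw [Finset.sum_congr rfl fun j _ => haj j, sum_ite_fin hdx, hdcast]
        have hrx : (0:ℤ) ≤ (r₁:ℤ) * (x₁:ℤ) := mul_nonneg (by linarith) (by linarith)
        refine ⟨?_, ?_⟩
        · rw [hSa]; nlinarith [hrx]
        · intro j
          rw [hNM, hq j, hSa, haj j, hM]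
          split_ifs with hj
          · nlinarith [mul_nonneg hr0.le hr0.le]
          · nlinarith [hrx]
      · have haj : ∀ j : Fin d, a i j = 0 := by
          intro j
          rw [ha, if_neg (by omega), if_neg (by omega), if_neg (by omega)]
        have hSa : (∑ j, a i j) = 0 := by
          rw [Finset.sum_congr rfl fun j _ => haj j]
          exact Finset.sum_const_zero
        have hrx : (0:ℤ) ≤ (r₁:ℤ) * (x₁:ℤ) := mul_nonneg (by linarith) (by linarith)
        refine ⟨by rw [hSa]; norm_num, ?_⟩
        · intro j
          rw [hNM, hq j, hSa, haj j, hM]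
          split_ifs with hj
          · nlinarith [hrx]
          · nlinarith [hrx]
    · have hSa : (∑ j, (Pi.single j₀ (1:ℤ) : Fin d → ℤ) j) = 1 := by
        rw [Finset.sum_pi_single']
        simp
      refine ⟨by rw [hSa], ?_⟩
      intro j
      rw [hNM, hSa]
      have h0 : (0:ℤ) ≤ (Pi.single j₀ (1:ℤ) : Fin d → ℤ) j := by
        rw [Pi.single_apply]; split <;> norm_num
      have h1 : (0:ℤ) ≤ (r₁:ℤ) * M * (Pi.single j₀ (1:ℤ) : Fin d → ℤ) j := by positivity
      linarith [h1]
end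

section
/- Let r₁ ≥ 2 and x₁ ≥ 1. For every vector q of the form (r₁^{x₁}, r₂^{x₂}) with r₂ = 1 + r₁x₁ and x₂ = r₁ - 1, each entry q_i of q divides 1 + Σ_j q_j; i.e., the simplex Δ_{(1,q)} is reflexive. -/
theorem stmt_11 (r₁ x₁ d : ℕ) (hr : 2 ≤ r₁) (hx : 1 ≤ x₁) (hd : d = x₁ + r₁ - 1)
    (q : Fin d → ℤ)
    (hq : ∀ j : Fin d, q j = if (j : ℕ) < x₁ then (r₁ : ℤ) else 1 + r₁ * x₁) :
    ∀ i : Fin d, q i ∣ 1 + ∑ j, q j := by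
  have hxd : x₁ ≤ d := by omega
  have hsum : 1 + ∑ j, q j = (r₁ : ℤ) * (1 + r₁ * x₁) := by
    have : ∑ j, q j = ∑ i ∈ Finset.range d, (if i < x₁ then (r₁ : ℤ) else 1 + r₁ * x₁) := by
      rw [← Fin.sum_univ_eq_sum_range]
      exact Finset.sum_congr rfl fun j _ => hq j
    rw [this, Finset.sum_ite, Finset.sum_const, Finset.sum_const]
    have h1 : (Finset.range d).filter (fun i => i < x₁) = Finset.range x₁ := by
      ext i; simp [Finset.mem_filter]; omega
    have h2 : ((Finset.range d).filter (fun i => ¬ i < x₁)).card = d - x₁ := by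
      rw [Finset.filter_not, Finset.card_sdiff_of_subset]
      · rw [h1]; simp
      · rw [h1]; exact Finset.range_subset_range.mpr hxd
    rw [h1, h2, Finset.card_range]
    have h3 : d - x₁ = r₁ - 1 := by omega
    rw [h3, nsmul_eq_mul, nsmul_eq_mul, Nat.cast_sub (by omega : 1 ≤ r₁)]
    push_cast
    ring
  intro i
  rw [hsum, hq i]
  split
  · exact Dvd.intro _ rfl
  · exact Dvd.intro_left _ rfl
end

section
/- Let r₁ ≥ 2, x₁ ≥ 1, d = x₁+r₁-1. For 0 ≤ k ≤ r₁-1 with additionally k ≤ x₁+1, the identity a'_{r₁-k} + Σ_{ℓ=r₁}^{d} e_{d-ℓ+1} = k·a'_{r₁} + (x₁+1-k)·a'_{r₁+2} holds in ℤ^d, where a'_{r₁-k} = ((-(k+1))^{x₁},(-(1+(k+1)x₁))^{r₁-1}), a'_{r₁} = ((-1)^{x₁},(-(1+x₁))^{r₁-1}), and a'_{r₁+2} = (0^{x₁},(-1)^{r₁-1}). -/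
theorem stmt_15 (r₁ x₁ d : ℕ) (hr : 2 ≤ r₁) (hx : 1 ≤ x₁) (hd : d = x₁ + r₁ - 1)
    (a : ℕ → Fin d → ℤ)
    (ha : ∀ i (j : Fin d), a i j =
      if (j : ℕ) < x₁ then -((r₁ : ℤ) - i + 1) else -(1 + ((r₁ : ℤ) - i + 1) * x₁))
    (v : Fin d → ℤ) (hv : ∀ j : Fin d, v j = if (j : ℕ) < x₁ then 0 else -1)
    (e : ℕ → Fin d → ℤ) (he : ∀ m (j : Fin d), e m j = if (j : ℕ) + 1 = m then 1 else 0) :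
    ∀ k : ℕ, k ≤ r₁ - 1 → k ≤ x₁ + 1 →
      a (r₁ - k) + ∑ ℓ ∈ Finset.Icc r₁ d, e (d - ℓ + 1)
        = (k : ℤ) • a r₁ + ((x₁ : ℤ) + 1 - k) • v := by
  intro k hk1 hk2
  funext j
  have hjd := j.isLt
  simp only [Pi.add_apply, Finset.sum_apply, Pi.smul_apply, smul_eq_mul, ha, hv, he]
  have hsum : (∑ ℓ ∈ Finset.Icc r₁ d, if (j : ℕ) + 1 = d - ℓ + 1 then (1:ℤ) else 0)
      = if (j : ℕ) < x₁ then 1 else 0 := by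
    have h1 : ∀ ℓ ∈ Finset.Icc r₁ d,
        (if (j : ℕ) + 1 = d - ℓ + 1 then (1:ℤ) else 0)
        = if d - (j : ℕ) = ℓ then (1:ℤ) else 0 := by
      intro ℓ hℓ
      simp only [Finset.mem_Icc] at hℓ
      congr 1
      simp only [eq_iff_iff]
      omega
    rw [Finset.sum_congr rfl h1, Finset.sum_ite_eq]
    simp only [Finset.mem_Icc]
    congr 1
    simp only [eq_iff_iff]
    omega
  rw [hsum]
  have hcast : ((r₁ - k : ℕ) : ℤ) = (r₁ : ℤ) - k := by
    have : k ≤ r₁ := by omega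
    push_cast [this]; ring
  rw [hcast]
  by_cases hjx : (j : ℕ) < x₁ <;> simp [hjx] <;> ring
end

section
/- Let r₁ ≥ 2, x₁ ≥ 1 with x₁ < r₁ - 2, and d = x₁+r₁-1. For x₁+2 ≤ k ≤ r₁-1, the identity a'_{r₁-k} + Σ_{ℓ=r₁}^{d} e_{d-ℓ+1} = (k-x₁-1)·a'_{r₁-1} + (2x₁+2-k)·a'_{r₁} holds in ℤ^d, where a'_i = ((-(r₁-i+1))^{x₁},(-(1+(r₁-i+1)x₁))^{r₁-1}) for 1 ≤ i ≤ r₁. -/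
theorem stmt_18 (r₁ x₁ d : ℕ) (hr : 2 ≤ r₁) (hx : 1 ≤ x₁) (hxr : x₁ < r₁ - 2)
    (hd : d = x₁ + r₁ - 1)
    (a : ℕ → Fin d → ℤ)
    (ha : ∀ i (j : Fin d), a i j =
      if (j : ℕ) < x₁ then -((r₁ : ℤ) - i + 1) else -(1 + ((r₁ : ℤ) - i + 1) * x₁))
    (e : ℕ → Fin d → ℤ) (he : ∀ m (j : Fin d), e m j = if (j : ℕ) + 1 = m then 1 else 0) :
    ∀ k : ℕ, x₁ + 2 ≤ k → k ≤ r₁ - 1 →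
      a (r₁ - k) + ∑ ℓ ∈ Finset.Icc r₁ d, e (d - ℓ + 1)
        = ((k : ℤ) - x₁ - 1) • a (r₁ - 1) + (2 * (x₁ : ℤ) + 2 - k) • a r₁ := by
  intro k hk1 hk2
  funext j
  have hjd := j.isLt
  have hkr : k ≤ r₁ := by omega
  simp only [Pi.add_apply, Finset.sum_apply, Pi.smul_apply, smul_eq_mul, ha, he]
  have hsum : (∑ ℓ ∈ Finset.Icc r₁ d, if (j : ℕ) + 1 = d - ℓ + 1 then (1:ℤ) else 0)
      = if (j : ℕ) < x₁ then 1 else 0 := by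
    have hcong : ∀ ℓ ∈ Finset.Icc r₁ d,
        (if (j : ℕ) + 1 = d - ℓ + 1 then (1:ℤ) else 0)
        = if ℓ = d - (j : ℕ) then (1:ℤ) else 0 := by
      intro ℓ hℓ
      simp only [Finset.mem_Icc] at hℓ
      refine if_congr ?_ rfl rfl
      omega
    rw [Finset.sum_congr rfl hcong, Finset.sum_ite_eq' (Finset.Icc r₁ d) (d - (j : ℕ))]
    simp only [Finset.mem_Icc]
    split <;> split <;> first | rfl | omega
  rw [hsum]
  have h1 : ((r₁ - k : ℕ) : ℤ) = (r₁ : ℤ) - k := by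
    push_cast [hkr]; ring
  have h2 : ((r₁ - 1 : ℕ) : ℤ) = (r₁ : ℤ) - 1 := by
    have : 1 ≤ r₁ := by omega
    push_cast [this]; ring
  rw [h1, h2]
  split <;> ring
end

section
/- Let r ≥ 2 and x ≥ 1 and set N = r(xr+1). Writing each b ∈ {0,…,N-1} uniquely as b = α(1+xr)+β with 0 ≤ α < r, 0 ≤ β < 1+xr, the function w(b) = α + β - (r-1)⌊(α+β)/r⌋ satisfies w(0) = 0 and w(b) ≥ 1 for all 1 ≤ b ≤ N-1. -/
theorem stmt_19 (r x : ℤ) (hr : 2 ≤ r) (hx : 1 ≤ x) (b α β : ℤ)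
    (hb0 : 0 ≤ b) (hbN : b ≤ r * (x * r + 1) - 1)
    (hα0 : 0 ≤ α) (hαr : α < r) (hβ0 : 0 ≤ β) (hβ : β < 1 + x * r)
    (hb : b = α * (1 + x * r) + β) :
    (b = 0 → α + β - (r - 1) * (Int.fdiv (α + β) r) = 0) ∧
    (1 ≤ b → 1 ≤ α + β - (r - 1) * (Int.fdiv (α + β) r)) := by
  have hαnn : 0 ≤ α * (1 + x * r) := by positivity
  constructor
  · intro h0
    have hβz : β = 0 := by omega
    have hαz : α = 0 := by nlinarith
    simp [hαz, hβz]
  · intro h1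
    have hs : 1 ≤ α + β := by
      by_contra h
      push_neg at h
      have hαz : α = 0 := by omega
      have hβz : β = 0 := by omega
      rw [hαz, hβz] at hb; simp at hb; omega
    set q := Int.fdiv (α + β) r with hq
    have hkey : (α + β).fmod r + r * q = α + β := Int.fmod_add_mul_fdiv _ _
    have hqnn : 0 ≤ q := Int.fdiv_nonneg (by omega) (by omega)
    have hmnn : 0 ≤ (α + β).fmod r := Int.fmod_nonneg (by omega) (by omega)
    have heq : α + β - (r - 1) * q = q + (α + β).fmod r := by linarith [hkey]; 
    rcases eq_or_lt_of_le hqnn with hq0 | hq1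
    · rw [heq]
      nlinarith
    · rw [heq]
      omega
end
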